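/- For x, y ∈ [l, l+1), one has x < y if and only if d(x) ≺_alt d(y), where d denotes the (-β,l)-expansion and ≺_alt the alternate order on integer sequences: u ≺_alt v iff at the first index m where u_m ≠ v_m one has (-1)^m (v_m - u_m) > 0. -/
import Mathlib


noncomputable def negBetaT (β l x : ℝ) : ℝ := -β * x - ⌊-β * x - l⌋

noncomputable def negBetaDigit (β l x : ℝ) (i : ℕ) : ℤ :=
  ⌊-β * ((negBetaT β l)^[i] x) - l⌋

/-- The alternate (strict) order on integer sequences: at the first differing
index `m` (0-indexed, corresponding to index `m+1` in 1-indexed notation),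
`(-1)^(m+1) * (v m - u m) > 0`. -/
def AltLt (u v : ℕ → ℤ) : Prop :=
  ∃ m : ℕ, (∀ k < m, u k = v k) ∧ (-1 : ℤ) ^ (m + 1) * (v m - u m) > 0

lemma negBetaT_mem (β l x : ℝ) : negBetaT β l x ∈ Set.Ico l (l + 1) := by
  have h : negBetaT β l x = Int.fract (-β * x - l) + l := by
    simp only [negBetaT, Int.fract]; ring
  constructor
  · rw [h]; nlinarith [Int.fract_nonneg (-β * x - l)]
  · rw [h]; nlinarith [Int.fract_lt_one (-β * x - l)]

lemma iter_mem (β l x : ℝ) (hx : x ∈ Set.Ico l (l + 1)) (i : ℕ) :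
    (negBetaT β l)^[i] x ∈ Set.Ico l (l + 1) := by
  cases i with
  | zero => simpa
  | succ n => rw [Function.iterate_succ_apply']; exact negBetaT_mem ..

lemma negBeta_step (β l x : ℝ) (m : ℕ) :
    (negBetaT β l)^[m + 1] x
      = -β * (negBetaT β l)^[m] x - (negBetaDigit β l x m : ℝ) := by
  rw [Function.iterate_succ_apply']
  rfl

lemma negBeta_diff_eq (β l x y : ℝ) (m : ℕ)
    (h : ∀ k < m, negBetaDigit β l x k = negBetaDigit β l y k) :
    (negBetaT β l)^[m] x - (negBetaT β l)^[m] y = (-β) ^ m * (x - y) := by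
  induction m with
  | zero => simp
  | succ n ih =>
    have hd : negBetaDigit β l x n = negBetaDigit β l y n := h n (Nat.lt_succ_self n)
    have ih' := ih (fun k hk => h k (hk.trans (Nat.lt_succ_self n)))
    rw [negBeta_step, negBeta_step, hd]
    linear_combination (-β) * ih'

lemma exists_digit_ne (β l : ℝ) (hβ : 1 < β) (x y : ℝ)
    (hx : x ∈ Set.Ico l (l + 1)) (hy : y ∈ Set.Ico l (l + 1)) (hxy : x ≠ y) :
    ∃ m, negBetaDigit β l x m ≠ negBetaDigit β l y m := by
  by_contra h
  push_neg at h
  have hβ0 : (0 : ℝ) < β := by linarith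
  have habs : 0 < |x - y| := abs_pos.mpr (sub_ne_zero.mpr hxy)
  obtain ⟨n, hn⟩ := pow_unbounded_of_one_lt (|x - y|)⁻¹ hβ
  have hdiff := negBeta_diff_eq β l x y n (fun k _ => h k)
  have ha := iter_mem β l x hx n
  have hb := iter_mem β l y hy n
  have hlt1 : |(negBetaT β l)^[n] x - (negBetaT β l)^[n] y| < 1 := by
    rw [abs_lt]
    obtain ⟨ha1, ha2⟩ := ha; obtain ⟨hb1, hb2⟩ := hb
    constructor <;> linarith
  rw [hdiff, abs_mul, abs_pow, abs_neg, abs_of_pos hβ0] at hlt1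
  have : (1 : ℝ) < β ^ n * |x - y| := by
    have h1 : |x - y|⁻¹ * |x - y| = 1 := inv_mul_cancel₀ (ne_of_gt habs)
    nlinarith [mul_lt_mul_of_pos_right hn habs]
  linarith

lemma altLt_forward (β l : ℝ) (hβ : 1 < β) (x y : ℝ)
    (hx : x ∈ Set.Ico l (l + 1)) (hy : y ∈ Set.Ico l (l + 1)) (hxy : x < y) :
    AltLt (negBetaDigit β l x) (negBetaDigit β l y) := by
  classical
  have hne := exists_digit_ne β l hβ x y hx hy (ne_of_lt hxy)
  set m := Nat.find hne with hmdef
  have hm : negBetaDigit β l x m ≠ negBetaDigit β l y m := Nat.find_spec hne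
  have hagree : ∀ k < m, negBetaDigit β l x k = negBetaDigit β l y k := by
    intro k hk
    by_contra hc
    exact absurd (Nat.find_le hc) (Nat.not_le.mpr hk)
  refine ⟨m, hagree, ?_⟩
  have hdiff := negBeta_diff_eq β l x y m hagree
  set a := (negBetaT β l)^[m] x with hadef
  set b := (negBetaT β l)^[m] y with hbdef
  have hβ0 : (0 : ℝ) < β := by linarith
  have e : (-1 : ℝ) ^ m * (-β) ^ m = β ^ m := by
    rw [← mul_pow]; ring_nf
  have key : (-1 : ℝ) ^ m * (a - b) < 0 := by
    rw [hdiff, ← mul_assoc, e]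
    have : (0 : ℝ) < β ^ m := pow_pos hβ0 m
    nlinarith
  have hda : negBetaDigit β l x m = ⌊-β * a - l⌋ := rfl
  have hdb : negBetaDigit β l y m = ⌊-β * b - l⌋ := rfl
  rcases Nat.even_or_odd m with hev | hod
  · have h1 : (-1 : ℝ) ^ m = 1 := hev.neg_one_pow
    have hab : a < b := by rw [h1, one_mul] at key; linarith
    have hle : negBetaDigit β l y m ≤ negBetaDigit β l x m := by
      rw [hda, hdb]
      apply Int.floor_le_floor
      nlinarith
    have hlt : negBetaDigit β l y m < negBetaDigit β l x m :=
      lt_of_le_of_ne hle (fun hh => hm hh.symm)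
    have h2 : (-1 : ℤ) ^ (m + 1) = -1 := Odd.neg_one_pow (by exact hev.add_one)
    rw [h2]
    nlinarith
  · have h1 : (-1 : ℝ) ^ m = -1 := hod.neg_one_pow
    have hab : b < a := by rw [h1] at key; nlinarith
    have hle : negBetaDigit β l x m ≤ negBetaDigit β l y m := by
      rw [hda, hdb]
      apply Int.floor_le_floor
      nlinarith
    have hlt : negBetaDigit β l x m < negBetaDigit β l y m := lt_of_le_of_ne hle hm
    have h2 : (-1 : ℤ) ^ (m + 1) = 1 := Even.neg_one_pow (by exact hod.add_one)
    rw [h2]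
    nlinarith

lemma altLt_irrefl (u : ℕ → ℤ) : ¬ AltLt u u := by
  rintro ⟨m, _, h⟩
  simp at h

lemma altLt_asymm (u v : ℕ → ℤ) (h1 : AltLt u v) (h2 : AltLt v u) : False := by
  obtain ⟨m, hm, hm'⟩ := h1
  obtain ⟨n, hn, hn'⟩ := h2
  rcases lt_trichotomy m n with h | h | h
  · rw [hn m h] at hm'; simp at hm'
  · subst h
    have hz : ((-1 : ℤ) ^ (m + 1) * (v m - u m)) + ((-1 : ℤ) ^ (m + 1) * (u m - v m)) = 0 := by
      ring
    linarith
  · rw [hm n h] at hn'; simp at hn'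

theorem stmt_11 (β l : ℝ) (hβ : 1 < β) (hl₁ : -1 < l) (hl₂ : l ≤ 0)
    (x y : ℝ) (hx : x ∈ Set.Ico l (l + 1)) (hy : y ∈ Set.Ico l (l + 1)) :
    x < y ↔ AltLt (negBetaDigit β l x) (negBetaDigit β l y) := by
  constructor
  · exact fun h => altLt_forward β l hβ x y hx hy h
  · intro h
    rcases lt_trichotomy x y with h' | h' | h'
    · exact h'
    · subst h'; exact absurd h (altLt_irrefl _)
    · exact absurd h (fun hh =>
        altLt_asymm _ _ (altLt_forward β l hβ y x hy hx h') hh)
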